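/- In the lambda algebra Λ over F_2, with generators λ_a (a ≥ 0) of bidegree (a, 1) subject to the Adem relations λ_a λ_b = Σ_{i} C(b−i−1, i−2a−1) λ_{a+b−i} λ_i for b > 2a, the admissible monomials λ_{i_1}⋯λ_{i_s} with 2 i_j ≥ i_{j+1} for all j form a spanning set: every monomial in the λ_a can be rewritten as an F_2-linear combination of admissible monomials. -/

import Mathlib

/-- The Adem relations of the mod-2 lambda algebra `Λ`: for `b > 2a`,
`λ_a λ_b = Σ_i C(b-i-1, i-2a-1) λ_{a+b-i} λ_i` (binomial coefficients mod 2; the range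
of `i` is exactly where both binomial arguments are nonnegative). -/
def lambdaRel : FreeAlgebra (ZMod 2) ℕ → FreeAlgebra (ZMod 2) ℕ → Prop := fun x y =>
  ∃ a b : ℕ, 2 * a < b ∧
    x = FreeAlgebra.ι (ZMod 2) a * FreeAlgebra.ι (ZMod 2) b ∧
    y = ∑ i ∈ Finset.Icc (2 * a + 1) (b - 1),
      ((Nat.choose (b - i - 1) (i - 2 * a - 1) : ZMod 2)) •
        (FreeAlgebra.ι (ZMod 2) (a + b - i) * FreeAlgebra.ι (ZMod 2) i)

/-- The lambda algebra `Λ` over `F_2`: the associative algebra generated by `λ_a`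
(`a ≥ 0`) subject to the Adem relations. -/
abbrev LambdaAlg := RingQuot lambdaRel

noncomputable def fgen (a : ℕ) : LambdaAlg :=
  RingQuot.mkAlgHom (ZMod 2) lambdaRel (FreeAlgebra.ι (ZMod 2) a)

noncomputable def Pl (l : List ℕ) : LambdaAlg := (l.map fgen).prod

/-- the weighted measure -/
def Mw : List ℕ → ℕ
  | [] => 0
  | a :: t => a * (t.length + 1) + Mw t

lemma Mw_append (p r : List ℕ) : Mw (p ++ r) = Mw p + p.sum * r.length + Mw r := by
  induction p with
  | nil => simp [Mw]
  | cons a t ih => simp [Mw, ih]; ring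

lemma Mw_le (l : List ℕ) : Mw l ≤ l.sum * l.length := by
  induction l with
  | nil => simp [Mw]
  | cons a t ih =>
    simp only [Mw, List.sum_cons, List.length_cons]
    have h2 : t.sum * t.length ≤ t.sum * (t.length + 1) := Nat.mul_le_mul_left _ (by omega)
    calc a * (t.length + 1) + Mw t ≤ a * (t.length + 1) + t.sum * (t.length + 1) := by omega
      _ = (a + t.sum) * (t.length + 1) := by ring

lemma exists_split {R : ℕ → ℕ → Prop} :
    ∀ l : List ℕ, ¬ l.Chain' R → ∃ p a b q, l = p ++ a :: b :: q ∧ ¬ R a b := by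
  intro l
  induction l with
  | nil => simp [List.Chain']
  | cons x t ih =>
    cases t with
    | nil => simp [List.Chain']
    | cons y s =>
      intro h
      simp only [List.Chain', List.isChain_cons_cons] at h
      by_cases hxy : R x y
      · obtain ⟨p, a, b, q, he, hr⟩ := ih (by unfold List.Chain'; tauto)
        exact ⟨x :: p, a, b, q, by simp [he], hr⟩
      · exact ⟨[], x, y, s, rfl, hxy⟩

lemma adem {a b : ℕ} (h : 2 * a < b) :
    fgen a * fgen b = ∑ i ∈ Finset.Icc (2 * a + 1) (b - 1),
      ((Nat.choose (b - i - 1) (i - 2 * a - 1) : ZMod 2)) •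
        (fgen (a + b - i) * fgen i) := by
  have hrel : lambdaRel
      (FreeAlgebra.ι (ZMod 2) a * FreeAlgebra.ι (ZMod 2) b)
      (∑ i ∈ Finset.Icc (2 * a + 1) (b - 1),
        ((Nat.choose (b - i - 1) (i - 2 * a - 1) : ZMod 2)) •
          (FreeAlgebra.ι (ZMod 2) (a + b - i) * FreeAlgebra.ι (ZMod 2) i)) :=
    ⟨a, b, h, rfl, rfl⟩
  have := RingQuot.mkAlgHom_rel (ZMod 2) hrel
  simpa [fgen, map_sum, map_mul] using this

lemma Pl_split (u v : ℕ) (p q : List ℕ) :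
    Pl (p ++ u :: v :: q) = Pl p * (fgen u * fgen v * Pl q) := by
  simp [Pl, mul_assoc]

noncomputable abbrev admSpan : Submodule (ZMod 2) LambdaAlg :=
  Submodule.span (ZMod 2)
    {m : LambdaAlg | ∃ l : List ℕ, List.Chain' (fun i j => j ≤ 2 * i) l ∧
      m = (l.map fun a =>
        RingQuot.mkAlgHom (ZMod 2) lambdaRel (FreeAlgebra.ι (ZMod 2) a)).prod}

lemma main_lemma : ∀ (k : ℕ) (l : List ℕ), l.sum * l.length - Mw l < k → Pl l ∈ admSpan := by
  intro k
  induction k with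
  | zero => intro l hl; omega
  | succ k ih =>
    intro l hl
    by_cases hc : List.Chain' (fun i j => j ≤ 2 * i) l
    · exact Submodule.subset_span ⟨l, hc, rfl⟩
    · obtain ⟨p, a, b, q, he, hab⟩ := exists_split l hc
      push_neg at hab
      subst he
      rw [Pl_split, adem hab, Finset.sum_mul, Finset.mul_sum]
      apply Submodule.sum_mem
      intro i hi
      simp only [Finset.mem_Icc] at hi
      rw [smul_mul_assoc, mul_smul_comm, ← Pl_split (a + b - i) i p q]
      apply Submodule.smul_mem
      apply ih
      -- measure decreases
      have hsum : (p ++ (a + b - i) :: i :: q).sum = (p ++ a :: b :: q).sum := by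
        simp; omega
      have hlen : (p ++ (a + b - i) :: i :: q).length = (p ++ a :: b :: q).length := by
        simp
      have hM1 : Mw (p ++ a :: b :: q)
          = Mw p + p.sum * (q.length + 2) + (a * (q.length + 2) + (b * (q.length + 1) + Mw q)) := by
        rw [Mw_append]; simp [Mw]; try ring
      have hM2 : Mw (p ++ (a + b - i) :: i :: q)
          = Mw p + p.sum * (q.length + 2)
            + ((a + b - i) * (q.length + 2) + (i * (q.length + 1) + Mw q)) := by
        rw [Mw_append]; simp [Mw]; try ring
      have hMlt : Mw (p ++ a :: b :: q) < Mw (p ++ (a + b - i) :: i :: q) := by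
        rw [hM1, hM2]
        have h1 : a * (q.length + 2) + b * (q.length + 1)
            = (a + b) * (q.length + 1) + a := by ring
        have h2 : (a + b - i) * (q.length + 2) + i * (q.length + 1)
            = ((a + b - i) + i) * (q.length + 1) + (a + b - i) := by ring
        have h3 : (a + b - i) + i = a + b := by omega
        have h4 : a < a + b - i := by omega
        rw [h3] at h2
        omega
      have hbd : Mw (p ++ (a + b - i) :: i :: q)
          ≤ (p ++ (a + b - i) :: i :: q).sum * (p ++ (a + b - i) :: i :: q).length :=
        Mw_le _
      rw [hsum, hlen] at hbd
      have : (p ++ a :: b :: q).sum * (p ++ a :: b :: q).length - Mw (p ++ (a + b - i) :: i :: q)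
          < (p ++ a :: b :: q).sum * (p ++ a :: b :: q).length - Mw (p ++ a :: b :: q) :=
        Nat.sub_lt_sub_left (lt_of_lt_of_le hMlt hbd) hMlt
      rw [hsum, hlen]
      omega

lemma Pl_mem (l : List ℕ) : Pl l ∈ admSpan :=
  main_lemma (l.sum * l.length - Mw l + 1) l (by omega)

theorem stmt_10 (x : LambdaAlg) :
    x ∈ Submodule.span (ZMod 2)
      {m : LambdaAlg | ∃ l : List ℕ, List.Chain' (fun i j => j ≤ 2 * i) l ∧
        m = (l.map fun a =>
          RingQuot.mkAlgHom (ZMod 2) lambdaRel (FreeAlgebra.ι (ZMod 2) a)).prod} := by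
  show x ∈ admSpan
  have htop : Algebra.adjoin (ZMod 2) (Set.range fgen) = ⊤ := by
    have hr : Set.range fgen
        = ⇑(RingQuot.mkAlgHom (ZMod 2) lambdaRel) '' Set.range (FreeAlgebra.ι (ZMod 2)) := by
      rw [← Set.range_comp]; rfl
    rw [hr, ← AlgHom.map_adjoin, FreeAlgebra.adjoin_range_ι, Algebra.map_top,
      (AlgHom.range_eq_top _).2 (RingQuot.mkAlgHom_surjective _ _)]
  have hx : x ∈ Subalgebra.toSubmodule (Algebra.adjoin (ZMod 2) (Set.range fgen)) := by
    rw [htop]; trivial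
  rw [Algebra.adjoin_eq_span] at hx
  refine Submodule.span_le.2 ?_ hx
  intro y hy
  have : ∃ l : List ℕ, y = Pl l := by
    induction hy using Submonoid.closure_induction with
    | mem z hz => obtain ⟨a, rfl⟩ := hz; exact ⟨[a], by simp [Pl]⟩
    | one => exact ⟨[], by simp [Pl]⟩
    | mul z w _ _ hz hw =>
      obtain ⟨l1, rfl⟩ := hz; obtain ⟨l2, rfl⟩ := hw
      exact ⟨l1 ++ l2, by simp [Pl]⟩
  obtain ⟨l, rfl⟩ := this
  exact Pl_mem l
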